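/- Let n ≥ 3 be odd. For all r, s ∈ {1,…,n}, the ray-extremal effects of the odd n-gon model satisfy e_r · e_s = 0 (standard ℝ³ inner product) if and only if s ≡ r + (n−1)/2 (mod n) or s ≡ r + (n+1)/2 (mod n). Thus each ray-extremal effect e_r is orthogonal to exactly two other ray-extremal effects. -/
import Mathlib


open Real Matrix

/-- `r_n = sqrt(sec(π/n))`. -/
noncomputable def rpoly (n : ℕ) : ℝ := Real.sqrt (1 / Real.cos (Real.pi / n))

/-- Ray-extremal effects of the odd `n`-gon model:
`e_i = (1/(1+r_n²))·(r_n cos(2πi/n), r_n sin(2πi/n), 1)ᵀ`. -/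
noncomputable def eOdd (n i : ℕ) : Fin 3 → ℝ :=
  (1 / (1 + rpoly n ^ 2)) •
    ![rpoly n * Real.cos (2 * Real.pi * i / n), rpoly n * Real.sin (2 * Real.pi * i / n), 1]

/-- for odd `n ≥ 3` and `r, s ∈ {1,…,n}`, `e_r · e_s = 0` iff
`s ≡ r + (n−1)/2 (mod n)` or `s ≡ r + (n+1)/2 (mod n)`; each ray-extremal effect
is orthogonal to exactly two other ray-extremal effects. -/
theorem odd_gon_ray_effect_orthogonality
    (n : ℕ) (hn : 3 ≤ n) (hodd : Odd n) :
    ∀ r ∈ Finset.Icc 1 n, ∀ s ∈ Finset.Icc 1 n,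
      (eOdd n r ⬝ᵥ eOdd n s = 0 ↔
        s % n = (r + (n - 1) / 2) % n ∨ s % n = (r + (n + 1) / 2) % n) := by
  obtain ⟨m, hm⟩ := hodd
  intro r hr s hs
  have hn0 : (0:ℝ) < n := by exact_mod_cast (by omega : 0 < n)
  have hnne : (n:ℝ) ≠ 0 := ne_of_gt hn0
  have hc : 0 < Real.cos (Real.pi / n) := by
    apply Real.cos_pos_of_mem_Ioo
    constructor
    · have : 0 < Real.pi / n := by positivity
      linarith [Real.pi_pos]
    · calc Real.pi / n ≤ Real.pi / 3 := by
            apply div_le_div_of_nonneg_left Real.pi_pos.le (by norm_num)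
            exact_mod_cast hn
          _ < Real.pi / 2 := by
            apply div_lt_div_of_pos_left Real.pi_pos <;> norm_num
  have hcne : Real.cos (Real.pi / n) ≠ 0 := ne_of_gt hc
  have hrp2 : rpoly n ^ 2 = 1 / Real.cos (Real.pi / n) :=
    Real.sq_sqrt (by positivity)
  have hdot : eOdd n r ⬝ᵥ eOdd n s
      = (1/(1+rpoly n^2))^2 *
        (rpoly n ^ 2 * Real.cos (2*Real.pi*r/n - 2*Real.pi*s/n) + 1) := by
    simp only [eOdd, dotProduct, Fin.sum_univ_three, Pi.smul_apply,
      Matrix.cons_val_zero, Matrix.cons_val_one, Matrix.head_cons,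
      Matrix.cons_val_two, Matrix.tail_cons, smul_eq_mul]
    rw [Real.cos_sub]; ring
  have hpos : 0 < (1/(1+rpoly n^2))^2 := by positivity
  -- reduce to cosine equation
  have key : eOdd n r ⬝ᵥ eOdd n s = 0 ↔
      Real.cos (2*Real.pi*r/n - 2*Real.pi*s/n) = Real.cos (Real.pi - Real.pi/n) := by
    rw [hdot, mul_eq_zero, or_iff_right (ne_of_gt hpos), hrp2, Real.cos_pi_sub]
    rw [div_mul_eq_mul_div, div_add' _ _ _ hcne, div_eq_zero_iff]
    constructor
    · rintro (h | h)
      · linarith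
      · exact absurd h hcne
    · intro h; left; rw [one_mul]; linarith
  rw [key, Real.cos_eq_cos_iff]
  -- integer form
  have hθ : Real.pi / n ≠ 0 := by positivity
  have hmod : ∀ a : ℕ, (s % n = a % n ↔ ∃ j : ℤ, (a:ℤ) - s = n * j) := by
    intro a
    constructor
    · intro h
      have : Nat.ModEq n s a := h
      obtain ⟨j, hj⟩ := (Nat.modEq_iff_dvd.mp this)
      exact ⟨j, by push_cast at hj ⊢; linarith⟩
    · rintro ⟨j, hj⟩
      have : Nat.ModEq n s a := Nat.modEq_iff_dvd.mpr ⟨j, by push_cast; linarith⟩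
      exact this
  have e1 : (n - 1) / 2 = m := by omega
  have e2 : (n + 1) / 2 = m + 1 := by omega
  rw [e1, e2, hmod, hmod]
  have hnz : (n:ℤ) = 2 * m + 1 := by exact_mod_cast hm
  constructor
  · rintro ⟨k, hk | hk⟩
    · -- π - π/n = 2kπ + (a - b)
      have hpi : (n:ℝ) * (Real.pi / n) = Real.pi := by field_simp
      have hr' : ((n:ℝ) - 1) * (Real.pi/n) = (2*(k:ℝ)*n + 2*(r:ℝ) - 2*(s:ℝ)) * (Real.pi/n) := by
        have ha : (2*Real.pi*r/n : ℝ) = (2*(r:ℝ)) * (Real.pi/n) := by ring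
        have hb : (2*Real.pi*s/n : ℝ) = (2*(s:ℝ)) * (Real.pi/n) := by ring
        rw [ha, hb] at hk
        linear_combination hk + (1 - 2*(k:ℝ)) * hpi
      have hint : ((n:ℤ) - 1) = 2*k*n + 2*r - 2*s := by
        have := mul_right_cancel₀ hθ hr'
        exact_mod_cast this
      right
      refine ⟨1 - k, ?_⟩
      push_cast
      rw [hnz] at hint ⊢
      ring_nf
      ring_nf at hint
      linarith
    · have hpi : (n:ℝ) * (Real.pi / n) = Real.pi := by field_simp
      have hr' : ((n:ℝ) - 1) * (Real.pi/n) = (2*(k:ℝ)*n - 2*(r:ℝ) + 2*(s:ℝ)) * (Real.pi/n) := by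
        have ha : (2*Real.pi*r/n : ℝ) = (2*(r:ℝ)) * (Real.pi/n) := by ring
        have hb : (2*Real.pi*s/n : ℝ) = (2*(s:ℝ)) * (Real.pi/n) := by ring
        rw [ha, hb] at hk
        linear_combination hk + (1 - 2*(k:ℝ)) * hpi
      have hint : ((n:ℤ) - 1) = 2*k*n - 2*r + 2*s := by
        have := mul_right_cancel₀ hθ hr'
        exact_mod_cast this
      left
      refine ⟨k, ?_⟩
      push_cast
      rw [hnz] at hint ⊢
      ring_nf
      ring_nf at hint
      linarith
  · have hpi : (n:ℝ) * (Real.pi / n) = Real.pi := by field_simp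
    rintro (⟨j, hj⟩ | ⟨j, hj⟩)
    · -- s ≡ r + m : second branch, k = -j? check: (r+m) - s = n*j ⟹ n-1 = 2kn - 2r + 2s with k=j
      refine ⟨j, Or.inr ?_⟩
      have hreal : ((n:ℝ) - 1) = 2*(j:ℝ)*n - 2*(r:ℝ) + 2*(s:ℝ) := by
        have : ((r:ℤ) + m - s : ℤ) = n * j := by push_cast at hj ⊢; linarith
        have h2 : ((n:ℤ) - 1) = 2*j*n - 2*r + 2*s := by rw [hnz] at this ⊢; linarith
        exact_mod_cast h2
      have ha : (2*Real.pi*r/n : ℝ) = (2*(r:ℝ)) * (Real.pi/n) := by ring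
      have hb : (2*Real.pi*s/n : ℝ) = (2*(s:ℝ)) * (Real.pi/n) := by ring
      rw [ha, hb]
      linear_combination hreal * (Real.pi/n) + (2*(j:ℝ) - 1) * hpi
    · refine ⟨1 - j, Or.inl ?_⟩
      have hreal : ((n:ℝ) - 1) = 2*((1:ℝ) - j)*n + 2*(r:ℝ) - 2*(s:ℝ) := by
        have : ((r:ℤ) + m + 1 - s : ℤ) = n * j := by push_cast at hj ⊢; linarith
        have h2 : ((n:ℤ) - 1) = 2*(1 - j)*n + 2*r - 2*s := by rw [hnz] at this ⊢; linarith
        exact_mod_cast h2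
      have ha : (2*Real.pi*r/n : ℝ) = (2*(r:ℝ)) * (Real.pi/n) := by ring
      have hb : (2*Real.pi*s/n : ℝ) = (2*(s:ℝ)) * (Real.pi/n) := by ring
      rw [ha, hb]
      push_cast
      linear_combination hreal * (Real.pi/n) + (2*((1:ℝ)-j) - 1) * hpi
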